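/- arXiv:2403.00650 — 4 statements merged into one kernel-verified Lean document; each statement's English description precedes it below -/
import Mathlib

section
/- Main Lemma: Let p ≥ 1 be a real number, let λ ∈ ((p-1)/p, 1), and let γ > 0, t > 0. Set α := pλ - p + 1 (so α ∈ (0,1]). Then (γ / Γ(α)) · ∫_0^t (t-s)^{α-1} · E_α(γ s^α) ds ≤ E_α(γ t^α), i.e. (γ / Γ(pλ-p+1)) ∫_0^t (t-s)^{pλ-p} E_{pλ-p+1}(γ s^{pλ-p+1}) ds ≤ E_{pλ-p+1}(γ t^{pλ-p+1}). -/
open MeasureTheory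


lemma gamma_growth {y a : ℝ} (hy : 1 < y) (ha : 0 < a) :
    Real.Gamma y * (y - 1) ^ a ≤ Real.Gamma (y + a) := by
  have h1 : (0:ℝ) < y - 1 := by linarith
  have hcv := Real.convexOn_log_Gamma
  have hs := hcv.slope_mono_adjacent (x := y - 1) (y := y) (z := y + a)
    (by simp; linarith) (by simp; linarith) (by linarith) (by linarith)
  have hG1 : 0 < Real.Gamma (y - 1) := Real.Gamma_pos_of_pos h1
  have hGy : 0 < Real.Gamma y := Real.Gamma_pos_of_pos (by linarith)
  have hGya : 0 < Real.Gamma (y + a) := Real.Gamma_pos_of_pos (by linarith)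
  have hrec : Real.Gamma y = (y - 1) * Real.Gamma (y - 1) := by
    have := Real.Gamma_add_one h1.ne'
    rw [sub_add_cancel] at this
    exact this
  rw [Function.comp_apply, Function.comp_apply, Function.comp_apply] at hs
  have key : Real.log (y - 1) ≤ (Real.log (Real.Gamma (y + a)) - Real.log (Real.Gamma y)) / a := by
    have : (Real.log (Real.Gamma y) - Real.log (Real.Gamma (y - 1))) / (y - (y - 1)) =
        Real.log (y - 1) := by
      rw [hrec, Real.log_mul h1.ne' hG1.ne']
      ring
    rw [this] at hs
    simpa using hs
  have : Real.log (Real.Gamma y) + a * Real.log (y - 1) ≤ Real.log (Real.Gamma (y + a)) := by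
    have := (le_div_iff₀ ha).mp key
    linarith
  calc Real.Gamma y * (y - 1) ^ a
      = Real.exp (Real.log (Real.Gamma y) + a * Real.log (y - 1)) := by
        rw [Real.exp_add, Real.exp_log hGy, Real.rpow_def_of_pos h1]
        ring_nf
    _ ≤ Real.exp (Real.log (Real.Gamma (y + a))) := Real.exp_le_exp.mpr this
    _ = Real.Gamma (y + a) := Real.exp_log hGya

lemma ml_summable {α : ℝ} (hα : 0 < α) (x : ℝ) :
    Summable fun n : ℕ => x ^ n / Real.Gamma ((n : ℝ) * α + 1) := by
  apply summable_of_ratio_norm_eventually_le (r := 1/2) (by norm_num)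
  have hinf : Filter.Tendsto (fun n : ℕ => ((n : ℝ) * α) ^ α) Filter.atTop Filter.atTop :=
    (tendsto_rpow_atTop hα).comp (tendsto_natCast_atTop_atTop.atTop_mul_const hα)
  filter_upwards [hinf.eventually_ge_atTop (2 * |x| + 1), Filter.eventually_ge_atTop 1]
    with n hn hn1
  have hn1' : (1:ℝ) ≤ (n:ℝ) := by exact_mod_cast hn1
  have hG : 0 < Real.Gamma ((n : ℝ) * α + 1) :=
    Real.Gamma_pos_of_pos (by positivity)
  have hG' : 0 < Real.Gamma (((n : ℝ) + 1) * α + 1) :=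
    Real.Gamma_pos_of_pos (by positivity)
  have hgrow := gamma_growth (y := (n : ℝ) * α + 1) (a := α)
    (by nlinarith) hα
  rw [add_sub_cancel_right] at hgrow
  have heq : (n : ℝ) * α + 1 + α = ((n : ℝ) + 1) * α + 1 := by ring
  rw [heq] at hgrow
  have hB : (0:ℝ) < ((n : ℝ) * α) ^ α := by positivity
  rw [norm_div, norm_div, norm_pow, norm_pow, Real.norm_eq_abs, Real.norm_eq_abs,
    Real.norm_eq_abs, abs_of_pos hG]
  push_cast
  rw [abs_of_pos hG']
  have hA : (0:ℝ) ≤ |x| ^ n := by positivity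
  have h2G : (0:ℝ) < 2 * Real.Gamma ((n:ℝ) * α + 1) := by linarith
  rw [show (1:ℝ)/2 * (|x| ^ n / Real.Gamma ((n:ℝ) * α + 1))
      = |x| ^ n / (2 * Real.Gamma ((n:ℝ) * α + 1)) by ring,
    div_le_div_iff₀ hG' h2G]
  have e1 : (0:ℝ) ≤ |x| ^ n * (Real.Gamma (((n:ℝ)+1) * α + 1)
      - Real.Gamma ((n:ℝ) * α + 1) * ((n : ℝ) * α) ^ α) :=
    mul_nonneg hA (by linarith)
  have e2 : (0:ℝ) ≤ Real.Gamma ((n:ℝ) * α + 1) * |x| ^ n *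
      (((n : ℝ) * α) ^ α - (2 * |x| + 1)) :=
    mul_nonneg (mul_nonneg hG.le hA) (by linarith)
  nlinarith [pow_succ |x| n, abs_nonneg x]

lemma real_beta {a b T : ℝ} (ha : 0 < a) (hb : 0 < b) (hT : 0 < T) :
    ∫ s in (0:ℝ)..T, s ^ (a - 1) * (T - s) ^ (b - 1)
      = Real.Gamma a * Real.Gamma b / Real.Gamma (a + b) * T ^ (a + b - 1) := by
  have h1 := Complex.betaIntegral_scaled (a : ℂ) (b : ℂ) hT
  have h2 : (∫ x in (0:ℝ)..T, (x : ℂ) ^ ((a:ℂ) - 1) * ((T : ℂ) - x) ^ ((b:ℂ) - 1))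
      = ((∫ s in (0:ℝ)..T, s ^ (a - 1) * (T - s) ^ (b - 1) : ℝ) : ℂ) := by
    rw [← intervalIntegral.integral_ofReal]
    refine intervalIntegral.integral_congr fun x hx => ?_
    rw [Set.uIcc_of_le hT.le] at hx
    rw [Complex.ofReal_mul, Complex.ofReal_cpow hx.1, Complex.ofReal_cpow (by linarith [hx.2] : (0:ℝ) ≤ T - x)]
    push_cast
    ring
  have hGab : (0:ℝ) < Real.Gamma (a + b) := Real.Gamma_pos_of_pos (by linarith)
  have hβ : Complex.betaIntegral a b
      = ((Real.Gamma a * Real.Gamma b / Real.Gamma (a + b) : ℝ) : ℂ) := by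
    have h := Complex.Gamma_mul_Gamma_eq_betaIntegral (s := (a:ℂ)) (t := (b:ℂ))
      (by simpa using ha) (by simpa using hb)
    rw [show (a:ℂ) + (b:ℂ) = ((a + b : ℝ) : ℂ) by push_cast; ring,
      Complex.Gamma_ofReal, Complex.Gamma_ofReal, Complex.Gamma_ofReal] at h
    have hne : ((Real.Gamma (a + b) : ℝ) : ℂ) ≠ 0 := by exact_mod_cast hGab.ne'
    push_cast
    rw [eq_div_iff hne]
    linear_combination -h
  apply Complex.ofReal_injective
  rw [← h2, h1, hβ]
  rw [show (a:ℂ) + (b:ℂ) - 1 = ((a + b - 1 : ℝ) : ℂ) by push_cast; ring,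
    ← Complex.ofReal_cpow hT.le]
  push_cast
  ring


/-- The Mittag-Leffler function `E_α(x) = ∑_{n=0}^∞ x^n / Γ(nα + 1)`. -/
noncomputable def mittagLeffler (α x : ℝ) : ℝ :=
  ∑' n : ℕ, x ^ n / Real.Gamma ((n : ℝ) * α + 1)

lemma key {α γ t : ℝ} (hα0 : 0 < α) (hγ : 0 < γ) (ht : 0 < t) :
    γ / Real.Gamma α *
        ∫ s in (0:ℝ)..t, (t - s) ^ (α - 1) * mittagLeffler α (γ * s ^ α)
      ≤ mittagLeffler α (γ * t ^ α) := by
  have hGα : 0 < Real.Gamma α := Real.Gamma_pos_of_pos hα0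
  set b : ℕ → ℝ := fun m => (γ * t ^ α) ^ m / Real.Gamma ((m : ℝ) * α + 1) with hb
  have hbsum : Summable b := ml_summable hα0 _
  set f : ℕ → ℝ → ℝ := fun n s =>
    (t - s) ^ (α - 1) * (γ ^ n * s ^ ((n : ℝ) * α) / Real.Gamma ((n : ℝ) * α + 1)) with hfdef
  -- integrability of each f n on Ioc 0 t
  have hbase : IntegrableOn (fun s : ℝ => (t - s) ^ (α - 1)) (Set.Icc 0 t) := by
    have h1 : IntervalIntegrable (fun s : ℝ => s ^ (α - 1)) volume 0 t :=
      intervalIntegral.intervalIntegrable_rpow' (by linarith)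
    have h2 := h1.comp_sub_left t
    rw [sub_zero, sub_self] at h2
    have h3 := h2.symm
    rwa [intervalIntegrable_iff_integrableOn_Icc_of_le ht.le] at h3
  have hfint : ∀ n : ℕ, IntegrableOn (f n) (Set.Ioc 0 t) := by
    intro n
    have hc : ContinuousOn
        (fun s : ℝ => γ ^ n * s ^ ((n : ℝ) * α) / Real.Gamma ((n : ℝ) * α + 1))
        (Set.Icc 0 t) := by
      apply ContinuousOn.div_const
      exact continuousOn_const.mul
        ((Real.continuous_rpow_const (by positivity)).continuousOn)
    exact (hbase.mul_continuousOn hc isCompact_Icc).mono_set Set.Ioc_subset_Icc_self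
  -- nonnegativity of f n on Ioc 0 t
  have hfnn : ∀ n : ℕ, ∀ s ∈ Set.Ioc (0:ℝ) t, 0 ≤ f n s := by
    intro n s hs
    exact mul_nonneg (Real.rpow_nonneg (by linarith [hs.2]) _)
      (div_nonneg (mul_nonneg (pow_nonneg hγ.le n) (Real.rpow_nonneg hs.1.le _))
        (Real.Gamma_pos_of_pos (by positivity)).le)
  -- value of each integral
  have hJ : ∀ n : ℕ, ∫ s in Set.Ioc (0:ℝ) t, f n s = Real.Gamma α / γ * b (n + 1) := by
    intro n
    have hbeta := real_beta (a := (n : ℝ) * α + 1) (b := α) (by positivity) hα0 ht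
    rw [← intervalIntegral.integral_of_le ht.le]
    have hfeq : ∀ s : ℝ, f n s = γ ^ n / Real.Gamma ((n : ℝ) * α + 1) *
        (s ^ ((n : ℝ) * α + 1 - 1) * (t - s) ^ (α - 1)) := by
      intro s
      simp only [hfdef, add_sub_cancel_right]
      ring
    have : (∫ s in (0:ℝ)..t, f n s)
        = γ ^ n / Real.Gamma ((n : ℝ) * α + 1) *
          ∫ s in (0:ℝ)..t, s ^ ((n : ℝ) * α + 1 - 1) * (t - s) ^ (α - 1) := by
      rw [← intervalIntegral.integral_const_mul]
      exact intervalIntegral.integral_congr fun s _ => hfeq s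
    rw [this, hbeta]
    have hGn : (0:ℝ) < Real.Gamma ((n : ℝ) * α + 1) :=
      Real.Gamma_pos_of_pos (by positivity)
    have he1 : (n : ℝ) * α + 1 + α - 1 = ((n : ℝ) + 1) * α := by ring
    have he2 : (n : ℝ) * α + 1 + α = ((n : ℝ) + 1) * α + 1 := by ring
    have hpow : (γ * t ^ α) ^ (n + 1) = γ ^ (n + 1) * t ^ (((n : ℝ) + 1) * α) := by
      rw [mul_pow, ← Real.rpow_natCast (t ^ α) (n + 1), ← Real.rpow_mul ht.le]
      push_cast
      ring_nf
    simp only [hb, hpow, he1, he2]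
    push_cast
    field_simp
    ring
  -- summability of the integrals
  have hJsum : Summable fun n : ℕ => Real.Gamma α / γ * b (n + 1) :=
    (((summable_nat_add_iff 1).mpr hbsum)).mul_left _
  have hnorm : Summable fun n : ℕ => ∫ s in Set.Ioc (0:ℝ) t, ‖f n s‖ := by
    have heq : ∀ n : ℕ, (∫ s in Set.Ioc (0:ℝ) t, ‖f n s‖)
        = ∫ s in Set.Ioc (0:ℝ) t, f n s := by
      intro n
      refine setIntegral_congr_fun measurableSet_Ioc fun s hs => ?_
      rw [Real.norm_eq_abs, abs_of_nonneg (hfnn n s hs)]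
    simp_rw [heq, hJ]
    exact hJsum
  -- interchange of sum and integral
  have hinterchange : (∫ s in Set.Ioc (0:ℝ) t, (t - s) ^ (α - 1) * mittagLeffler α (γ * s ^ α))
      = ∑' n : ℕ, ∫ s in Set.Ioc (0:ℝ) t, f n s := by
    rw [integral_tsum_of_summable_integral_norm hfint hnorm]
    refine setIntegral_congr_fun measurableSet_Ioc fun s hs => ?_
    rw [mittagLeffler, ← tsum_mul_left]
    congr 1 with n
    simp only [hfdef]
    rw [mul_pow, ← Real.rpow_natCast (s ^ α) n, ← Real.rpow_mul hs.1.le]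
    ring_nf
  have hIoc : (∫ s in (0:ℝ)..t, (t - s) ^ (α - 1) * mittagLeffler α (γ * s ^ α))
      = ∫ s in Set.Ioc (0:ℝ) t, (t - s) ^ (α - 1) * mittagLeffler α (γ * s ^ α) :=
    intervalIntegral.integral_of_le ht.le
  rw [hIoc, hinterchange]
  simp_rw [hJ]
  rw [tsum_mul_left]
  have hS : γ / Real.Gamma α * (Real.Gamma α / γ * ∑' n : ℕ, b (n + 1))
      = ∑' n : ℕ, b (n + 1) := by
    field_simp
  rw [hS]
  have hml : mittagLeffler α (γ * t ^ α) = b 0 + ∑' n : ℕ, b (n + 1) := by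
    rw [mittagLeffler]
    exact Summable.tsum_eq_zero_add hbsum
  rw [hml]
  have hb0 : b 0 = 1 := by
    simp [hb, Real.Gamma_one]
  linarith


/-- Main Lemma: for `p ≥ 1`, `λ ∈ ((p-1)/p, 1)`, `γ > 0`, `t > 0`,
`(γ / Γ(pλ-p+1)) ∫_0^t (t-s)^{pλ-p} E_{pλ-p+1}(γ s^{pλ-p+1}) ds ≤ E_{pλ-p+1}(γ t^{pλ-p+1})`. -/
theorem main_lemma (p lam γ t : ℝ) (hp : 1 ≤ p)
    (hlam : lam ∈ Set.Ioo ((p - 1) / p) 1) (hγ : 0 < γ) (ht : 0 < t) :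
    γ / Real.Gamma (p * lam - p + 1) *
        ∫ s in (0 : ℝ)..t,
          (t - s) ^ (p * lam - p) *
            mittagLeffler (p * lam - p + 1) (γ * s ^ (p * lam - p + 1))
      ≤ mittagLeffler (p * lam - p + 1) (γ * t ^ (p * lam - p + 1)) := by
  obtain ⟨h1, h2⟩ := hlam
  have hp0 : (0:ℝ) < p := by linarith
  have hα0 : 0 < p * lam - p + 1 := by
    have := (div_lt_iff₀ hp0).mp h1
    nlinarith
  have h := key (α := p * lam - p + 1) hα0 hγ ht
  simpa [add_sub_cancel_right] using h
end

section
/- Exact identity underlying the Main Lemma: Let α ∈ (0, 1], γ > 0 and t > 0. Then (γ / Γ(α)) · ∫_0^t (t-s)^{α-1} · E_α(γ s^α) ds = E_α(γ t^α) - 1. -/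
open MeasureTheory

open Real intervalIntegral

/-- Wendel-type bound from log-convexity: `Γ(y+δ) ≤ Γ(y) y^δ` for `y > 0`, `δ ∈ [0,1]`. -/
lemma Gamma_add_le {y δ : ℝ} (hy : 0 < y) (hδ0 : 0 ≤ δ) (hδ1 : δ ≤ 1) :
    Real.Gamma (y + δ) ≤ Real.Gamma y * y ^ δ := by
  have hΓy : 0 < Real.Gamma y := Real.Gamma_pos_of_pos hy
  have hΓy1 : 0 < Real.Gamma (y + 1) := Real.Gamma_pos_of_pos (by linarith)
  have hΓyδ : 0 < Real.Gamma (y + δ) := Real.Gamma_pos_of_pos (by linarith)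
  have hconv := Real.convexOn_log_Gamma.2 (Set.mem_Ioi.2 hy)
    (Set.mem_Ioi.2 (show (0:ℝ) < y + 1 by linarith)) (by linarith : (0:ℝ) ≤ 1 - δ) hδ0
    (by ring)
  have hpt : (1 - δ) • y + δ • (y + 1) = y + δ := by simp [smul_eq_mul]; ring
  rw [hpt] at hconv
  simp only [Function.comp_apply, smul_eq_mul] at hconv
  have : Real.log (Real.Gamma (y + δ)) ≤ Real.log (Real.Gamma y * y ^ δ) := by
    rw [Real.log_mul hΓy.ne' (Real.rpow_pos_of_pos hy δ).ne', Real.log_rpow hy]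
    calc Real.log (Real.Gamma (y + δ)) ≤
        (1 - δ) * Real.log (Real.Gamma y) + δ * Real.log (Real.Gamma (y + 1)) := hconv
      _ = Real.log (Real.Gamma y) + δ * Real.log y := by
          rw [Real.Gamma_add_one hy.ne', Real.log_mul hy.ne' hΓy.ne']; ring
  exact (Real.log_le_log_iff hΓyδ (by positivity)).1 this

/-- Key growth estimate: `Γ((n+1)α + 1) ≥ ((n+1)α)^α · Γ(nα + 1)` for `0 < α ≤ 1`. -/
lemma Gamma_succ_ge {α : ℝ} (hα0 : 0 < α) (hα1 : α ≤ 1) (n : ℕ) :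
    (((n : ℝ)+1) * α) ^ α * Real.Gamma ((n : ℝ) * α + 1) ≤ Real.Gamma (((n : ℝ)+1) * α + 1) := by
  have hy0 : 0 < ((n : ℝ) + 1) * α := by positivity
  have h1 : Real.Gamma ((n : ℝ) * α + 1) ≤ Real.Gamma (((n:ℝ)+1)*α) * (((n:ℝ)+1)*α) ^ (1 - α) := by
    have := Gamma_add_le (δ := 1 - α) hy0 (by linarith) (by linarith)
    have he : ((n:ℝ)+1)*α + (1 - α) = (n : ℝ) * α + 1 := by ring
    rwa [he] at this
  have h2 : Real.Gamma (((n:ℝ)+1)*α + 1) = (((n:ℝ)+1)*α) * Real.Gamma (((n:ℝ)+1)*α) :=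
    Real.Gamma_add_one hy0.ne'
  have hsplit : (((n:ℝ)+1)*α) = (((n:ℝ)+1)*α) ^ (1 - α) * (((n:ℝ)+1)*α) ^ α := by
    rw [← Real.rpow_add hy0]; simp
  calc (((n:ℝ)+1)*α) ^ α * Real.Gamma ((n : ℝ) * α + 1)
      ≤ (((n:ℝ)+1)*α) ^ α * (Real.Gamma (((n:ℝ)+1)*α) * (((n:ℝ)+1)*α) ^ (1 - α)) := by
        apply mul_le_mul_of_nonneg_left h1 (by positivity)
    _ = (((n:ℝ)+1)*α) ^ (1 - α) * (((n:ℝ)+1)*α) ^ α * Real.Gamma (((n:ℝ)+1)*α) := by ring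
    _ = (((n:ℝ)+1)*α) * Real.Gamma (((n:ℝ)+1)*α) := by rw [← hsplit]
    _ = Real.Gamma (((n:ℝ)+1)*α + 1) := h2.symm

/-- Summability of the Mittag-Leffler series. -/
lemma summable_ML {α : ℝ} (hα0 : 0 < α) (hα1 : α ≤ 1) {x : ℝ} (hx : 0 ≤ x) :
    Summable (fun n : ℕ => x ^ n / Real.Gamma ((n : ℝ) * α + 1)) := by
  apply summable_of_ratio_norm_eventually_le (r := 1/2) (by norm_num)
  have htend : Filter.Tendsto (fun n : ℕ => (((n:ℝ)+1) * α) ^ α) Filter.atTop Filter.atTop := by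
    apply (tendsto_rpow_atTop hα0).comp
    apply Filter.Tendsto.atTop_mul_const hα0
    exact Filter.tendsto_atTop_add_const_right _ 1 tendsto_natCast_atTop_atTop
  filter_upwards [htend.eventually_ge_atTop (2 * x + 1)] with n hn
  have hΓn : 0 < Real.Gamma ((n : ℝ) * α + 1) := Real.Gamma_pos_of_pos (by positivity)
  have hΓn1 : 0 < Real.Gamma (((n : ℝ) + 1) * α + 1) := Real.Gamma_pos_of_pos (by positivity)
  have hkey := Gamma_succ_ge hα0 hα1 n
  have hb : (0:ℝ) < (((n:ℝ)+1) * α) ^ α := by positivity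
  rw [Real.norm_eq_abs, Real.norm_eq_abs, abs_of_nonneg (by positivity),
    abs_of_nonneg (by positivity)]
  have hcast : ((n+1 : ℕ) : ℝ) = (n : ℝ) + 1 := by push_cast; ring
  rw [hcast, div_le_iff₀ hΓn1]
  have h2 : 1/2 * (x ^ n / Real.Gamma ((n:ℝ) * α + 1)) * Real.Gamma (((n:ℝ)+1)*α + 1)
      = (x ^ n / Real.Gamma ((n:ℝ)*α+1) / 2) * Real.Gamma (((n:ℝ)+1)*α+1) := by ring
  rw [h2]
  calc x ^ (n+1)
      = x * x ^ n := by ring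
    _ ≤ ((2*x+1)/2) * x ^ n := by
        apply mul_le_mul_of_nonneg_right (by linarith) (by positivity)
    _ ≤ ((((n:ℝ)+1)*α)^α / 2) * x ^ n := by
        apply mul_le_mul_of_nonneg_right (by linarith [hn]) (by positivity)
    _ = (x ^ n / Real.Gamma ((n:ℝ)*α+1) / 2) * ((((n:ℝ)+1)*α)^α * Real.Gamma ((n:ℝ)*α+1)) := by
        field_simp
    _ ≤ (x ^ n / Real.Gamma ((n:ℝ)*α+1) / 2) * Real.Gamma (((n:ℝ)+1)*α+1) := by
        apply mul_le_mul_of_nonneg_left hkey (by positivity)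

/-- Integrability of the Beta-type integrand on `[0, t]`. -/
lemma beta_intervalIntegrable {a b t : ℝ} (ha : 0 < a) (hb : 0 < b) (ht : 0 < t) :
    IntervalIntegrable (fun s : ℝ => s ^ (a - 1) * (t - s) ^ (b - 1)) volume 0 t := by
  apply IntervalIntegrable.trans (b := t/2)
  · apply IntervalIntegrable.mul_continuousOn
    · exact intervalIntegrable_rpow' (by linarith)
    · apply ContinuousOn.rpow_const
      · exact (continuous_const.sub continuous_id).continuousOn
      · intro x hx
        rw [Set.uIcc_of_le (by linarith)] at hx
        left
        have h2 := hx.2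
        intro h
        nlinarith
  · have h1 : IntervalIntegrable (fun s : ℝ => (t - s) ^ (b - 1)) volume (t/2) t := by
      have h0 := (intervalIntegrable_rpow' (r := b - 1) (by linarith : (-1:ℝ) < b - 1)
        (a := t/2) (b := 0)).comp_sub_left t
      have e1 : t - t/2 = t/2 := by ring
      have e2 : t - 0 = t := by ring
      rwa [e1, e2] at h0
    apply IntervalIntegrable.continuousOn_mul h1
    apply ContinuousOn.rpow_const continuous_id.continuousOn
    intro x hx
    rw [Set.uIcc_of_le (by linarith)] at hx
    left
    simp only [id_eq]
    intro h
    rw [h] at hx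
    have := hx.1; linarith
  
/-- The scaled real Beta integral. -/
lemma beta_integral_value {a b t : ℝ} (ha : 0 < a) (hb : 0 < b) (ht : 0 < t) :
    ∫ s in (0:ℝ)..t, s ^ (a - 1) * (t - s) ^ (b - 1)
      = Real.Gamma a * Real.Gamma b / Real.Gamma (a + b) * t ^ (a + b - 1) := by
  have h := Complex.betaIntegral_scaled (a : ℂ) (b : ℂ) ht
  have hgab : Complex.Gamma ((a:ℂ) + b) = ((Real.Gamma (a + b) : ℝ) : ℂ) := by
    rw [show ((a:ℂ) + b) = ((a + b : ℝ) : ℂ) by push_cast; ring, Complex.Gamma_ofReal]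
  have hne : ((Real.Gamma (a + b) : ℝ) : ℂ) ≠ 0 := by
    exact_mod_cast (Real.Gamma_pos_of_pos (by linarith : (0:ℝ) < a + b)).ne'
  have hbeta : Complex.betaIntegral a b
      = ((Real.Gamma a * Real.Gamma b / Real.Gamma (a + b) : ℝ) : ℂ) := by
    have hg := Complex.Gamma_mul_Gamma_eq_betaIntegral
      (s := (a:ℂ)) (t := (b:ℂ)) (by simpa using ha) (by simpa using hb)
    rw [hgab, Complex.Gamma_ofReal, Complex.Gamma_ofReal] at hg
    push_cast
    rw [eq_div_iff hne]
    linear_combination -hg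
  have hLHS : (∫ x in (0:ℝ)..t, (x : ℂ) ^ ((a:ℂ) - 1) * ((t : ℂ) - x) ^ ((b:ℂ) - 1))
      = ((∫ s in (0:ℝ)..t, s ^ (a - 1) * (t - s) ^ (b - 1) : ℝ) : ℂ) := by
    rw [← intervalIntegral.integral_ofReal]
    apply intervalIntegral.integral_congr
    intro x hx
    rw [Set.uIcc_of_le ht.le] at hx
    simp only []
    rw [show ((a:ℂ) - 1) = ((a - 1 : ℝ) : ℂ) by push_cast; ring,
      show ((b:ℂ) - 1) = ((b - 1 : ℝ) : ℂ) by push_cast; ring,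
      show ((t:ℂ) - (x:ℂ)) = ((t - x : ℝ) : ℂ) by push_cast; ring,
      ← Complex.ofReal_cpow hx.1, ← Complex.ofReal_cpow (by linarith [hx.2] : (0:ℝ) ≤ t - x),
      ← Complex.ofReal_mul]
  have hRHS : ((t:ℂ)) ^ ((a:ℂ) + b - 1) = ((t ^ (a + b - 1) : ℝ) : ℂ) := by
    rw [show ((a:ℂ) + b - 1) = ((a + b - 1 : ℝ) : ℂ) by push_cast; ring,
      ← Complex.ofReal_cpow ht.le]
  rw [hLHS, hRHS, hbeta, ← Complex.ofReal_mul] at h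
  have h2 : (∫ s in (0:ℝ)..t, s ^ (a - 1) * (t - s) ^ (b - 1))
      = t ^ (a + b - 1) * (Real.Gamma a * Real.Gamma b / Real.Gamma (a + b)) := by
    exact_mod_cast h
  rw [h2]; ring

/-- Exact identity underlying the Main Lemma: for `α ∈ (0,1]`, `γ > 0`, `t > 0`,
`(γ / Γ(α)) ∫_0^t (t-s)^{α-1} E_α(γ s^α) ds = E_α(γ t^α) - 1`. -/
theorem main_lemma_exact_identity (α γ t : ℝ) (hα : α ∈ Set.Ioc (0 : ℝ) 1)
    (hγ : 0 < γ) (ht : 0 < t) :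
    γ / Real.Gamma α *
        ∫ s in (0 : ℝ)..t, (t - s) ^ (α - 1) * mittagLeffler α (γ * s ^ α)
      = mittagLeffler α (γ * t ^ α) - 1 := by
  obtain ⟨hα0, hα1⟩ := hα
  have hΓα : 0 < Real.Gamma α := Real.Gamma_pos_of_pos hα0
  set x : ℝ := γ * t ^ α with hx
  have hx0 : 0 ≤ x := by positivity
  -- the summand functions
  set F : ℕ → ℝ → ℝ := fun n s =>
    γ ^ n / Real.Gamma ((n : ℝ) * α + 1) * (s ^ ((n : ℝ) * α) * (t - s) ^ (α - 1)) with hF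
  have hΓn : ∀ n : ℕ, 0 < Real.Gamma ((n : ℝ) * α + 1) :=
    fun n => Real.Gamma_pos_of_pos (by positivity)
  -- pointwise expansion of the Mittag-Leffler composition
  have hML : ∀ s : ℝ, 0 ≤ s → mittagLeffler α (γ * s ^ α)
      = ∑' n : ℕ, γ ^ n * s ^ ((n : ℝ) * α) / Real.Gamma ((n : ℝ) * α + 1) := by
    intro s hs
    unfold mittagLeffler
    refine tsum_congr fun n => ?_
    congr 1
    rw [mul_pow, ← Real.rpow_natCast (s ^ α) n, ← Real.rpow_mul hs, mul_comm α (n : ℝ)]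
  -- rewrite the integrand as a series
  have hinteg : (∫ s in (0 : ℝ)..t, (t - s) ^ (α - 1) * mittagLeffler α (γ * s ^ α))
      = ∫ s in (0 : ℝ)..t, ∑' n : ℕ, F n s := by
    apply intervalIntegral.integral_congr
    intro s hs
    rw [Set.uIcc_of_le ht.le] at hs
    simp only []
    rw [hML s hs.1, ← tsum_mul_left]
    exact tsum_congr fun n => by ring
  -- integrability of each term
  have hFint : ∀ n : ℕ, IntervalIntegrable (F n) volume 0 t := by
    intro n
    have hbi := beta_intervalIntegrable (a := (n : ℝ) * α + 1) (b := α)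
      (by positivity) hα0 ht
    have he : (n : ℝ) * α + 1 - 1 = (n : ℝ) * α := by ring
    rw [he] at hbi
    exact hbi.const_mul _
  -- value of each term's integral
  set c : ℕ → ℝ := fun n => Real.Gamma α / γ *
    (x ^ (n + 1) / Real.Gamma (((n : ℝ) + 1) * α + 1)) with hc
  have hval : ∀ n : ℕ, (∫ s in Set.Ioc (0:ℝ) t, F n s) = c n := by
    intro n
    rw [← intervalIntegral.integral_of_le ht.le]
    have hbv := beta_integral_value (a := (n : ℝ) * α + 1) (b := α)
      (by positivity) hα0 ht
    have he : (n : ℝ) * α + 1 - 1 = (n : ℝ) * α := by ring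
    rw [he] at hbv
    rw [hF]
    rw [intervalIntegral.integral_const_mul, hbv, hc, hx]
    have he2 : (n : ℝ) * α + 1 + α - 1 = ((n : ℝ) + 1) * α := by ring
    have he3 : (n : ℝ) * α + 1 + α = ((n : ℝ) + 1) * α + 1 := by ring
    rw [he2, he3]
    have hpow : (γ * t ^ α) ^ (n + 1) = γ ^ (n + 1) * t ^ (((n : ℝ) + 1) * α) := by
      rw [mul_pow, ← Real.rpow_natCast (t ^ α) (n + 1), ← Real.rpow_mul ht.le]
      push_cast
      ring_nf
    simp only [hpow]
    have h1 := (hΓn n).ne'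
    have h2 : Real.Gamma (((n : ℝ) + 1) * α + 1) ≠ 0 :=
      (Real.Gamma_pos_of_pos (by positivity)).ne'
    field_simp
    ring
  -- norms
  have hnorm : ∀ n : ℕ, (∫ s in Set.Ioc (0:ℝ) t, ‖F n s‖) = c n := by
    intro n
    rw [← hval n]
    apply setIntegral_congr_fun measurableSet_Ioc
    intro s hs
    apply norm_of_nonneg
    have h1 : (0:ℝ) ≤ s ^ ((n : ℝ) * α) := Real.rpow_nonneg hs.1.le _
    have h2 : (0:ℝ) ≤ (t - s) ^ (α - 1) := Real.rpow_nonneg (by linarith [hs.2]) _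
    have := (hΓn n).le
    positivity
  -- summability of the values
  have hsum : Summable c := by
    have hS := summable_ML hα0 hα1 hx0
    have hS1 := (summable_nat_add_iff 1).2 hS
    have : (fun n : ℕ => x ^ (n + 1) / Real.Gamma (((n : ℝ) + 1) * α + 1))
        = fun n : ℕ => x ^ (n + 1) / Real.Gamma (((n + 1 : ℕ) : ℝ) * α + 1) := by
      funext n; push_cast; ring_nf
    exact Summable.mul_left _ (by rw [this]; exact hS1)
  -- swap integral and sum
  have hswap : (∫ s in (0 : ℝ)..t, ∑' n : ℕ, F n s) = ∑' n : ℕ, c n := by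
    rw [intervalIntegral.integral_of_le ht.le]
    rw [← MeasureTheory.integral_tsum_of_summable_integral_norm
      (fun n => (hFint n).1) (by simpa only [hnorm] using hsum)]
    exact tsum_congr hval
  rw [hinteg, hswap]
  -- final computation
  have hT : ∑' n : ℕ, c n = Real.Gamma α / γ *
      ∑' n : ℕ, x ^ (n + 1) / Real.Gamma (((n : ℝ) + 1) * α + 1) := tsum_mul_left
  have hS := summable_ML hα0 hα1 hx0
  have hzero : mittagLeffler α x =
      1 + ∑' n : ℕ, x ^ (n + 1) / Real.Gamma (((n : ℝ) + 1) * α + 1) := by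
    unfold mittagLeffler
    rw [Summable.tsum_eq_zero_add hS]
    congr 1
    · simp [Real.Gamma_one]
    · refine tsum_congr fun n => ?_
      push_cast
      ring_nf
  rw [hT, hzero]
  have hcancel : γ / Real.Gamma α * (Real.Gamma α / γ) = 1 := by field_simp
  rw [← mul_assoc, hcancel, one_mul]
  ring
end

section
/- Summability of the Mittag-Leffler series: For every α > 0 and every x ∈ ℝ, the series n ↦ x^n / Γ(nα + 1) is (absolutely) summable; in particular the Mittag-Leffler function E_α(x) = ∑_{n=0}^∞ x^n / Γ(nα + 1) is well defined for all real x. -/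
open Filter

lemma gamma_step_aux (y c : ℝ) (hy : 1 ≤ y) (hc : 1 ≤ c) :
    y * Real.Gamma y ≤ Real.Gamma (y + c) := by
  have h1 : Real.Gamma (y + 1) = y * Real.Gamma y :=
    Real.Gamma_add_one (by linarith)
  rw [← h1]
  exact Real.Gamma_strictMonoOn_Ici.monotoneOn (by simp [Set.mem_Ici]; linarith)
    (by simp [Set.mem_Ici]; linarith) (by linarith)

/-- Summability of the Mittag-Leffler series: for every `α > 0` and every `x : ℝ`, the
series `n ↦ x^n / Γ(nα + 1)` is summable. -/
theorem mittagLeffler_summable (α x : ℝ) (hα : 0 < α) :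
    Summable fun n : ℕ => x ^ n / Real.Gamma ((n : ℝ) * α + 1) := by
  have hΓpos : ∀ n : ℕ, 0 < Real.Gamma ((n : ℝ) * α + 1) := fun n =>
    Real.Gamma_pos_of_pos (by positivity)
  set g : ℕ → ℝ := fun n => |x| ^ n / Real.Gamma ((n : ℝ) * α + 1) with hg
  have hg0 : ∀ n, 0 ≤ g n := fun n => div_nonneg (by positivity) (hΓpos n).le
  suffices hgs : Summable g by
    refine Summable.of_norm ?_
    convert hgs using 2 with n
    rw [norm_div, norm_pow, Real.norm_eq_abs, Real.norm_eq_abs,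
      abs_of_pos (hΓpos n)]
  set k : ℕ := ⌈1 / α⌉₊ + 1 with hkdef
  have hkα : (1 : ℝ) ≤ (k : ℝ) * α := by
    have h1 : 1 / α ≤ (⌈1 / α⌉₊ : ℝ) := Nat.le_ceil _
    have h2 : 1 / α ≤ (k : ℝ) := by push_cast [hkdef]; linarith
    calc (1 : ℝ) = (1 / α) * α := by field_simp
    _ ≤ (k : ℝ) * α := mul_le_mul_of_nonneg_right h2 hα.le
  have key : ∀ r : ℕ, Summable fun m : ℕ => g (m * k + r) := by
    intro r
    apply summable_of_ratio_norm_eventually_le (r := 1 / 2) (by norm_num)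
    have h0 : Tendsto (fun m : ℕ => (m : ℝ) * α + 1) atTop atTop :=
      tendsto_atTop_add_const_right _ _
        (Tendsto.atTop_mul_const hα tendsto_natCast_atTop_atTop)
    have htend : Tendsto (fun m : ℕ => ((m * k + r : ℕ) : ℝ) * α + 1) atTop atTop := by
      refine tendsto_atTop_mono (fun m => ?_) h0
      have h1 : (m : ℝ) ≤ ((m * k + r : ℕ) : ℝ) := by
        have : m ≤ m * k + r := le_add_right (Nat.le_mul_of_pos_right m k.pos_of_neZero)
        exact_mod_cast this
      nlinarith
    filter_upwards [htend.eventually_ge_atTop (2 * |x| ^ k)] with m hm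
    set n : ℕ := m * k + r with hn
    set y : ℝ := (n : ℝ) * α + 1 with hy
    have hy1 : 1 ≤ y := by
      have : 0 ≤ (n : ℝ) * α := by positivity
      linarith
    have hstep : y * Real.Gamma y ≤ Real.Gamma (y + (k : ℝ) * α) :=
      gamma_step_aux y ((k : ℝ) * α) hy1 hkα
    have hΓy : 0 < Real.Gamma y := Real.Gamma_pos_of_pos (by linarith)
    have hΓy' : 0 < Real.Gamma (y + (k : ℝ) * α) :=
      Real.Gamma_pos_of_pos (by nlinarith)
    have hidx : ((m + 1) * k + r : ℕ) = n + k := by rw [hn]; ring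
    have hcast : (((n + k : ℕ)) : ℝ) * α + 1 = y + (k : ℝ) * α := by
      push_cast [hy]; ring
    have hGnorm : ‖g (n + k)‖ = |x| ^ n * |x| ^ k / Real.Gamma (y + (k : ℝ) * α) := by
      rw [Real.norm_eq_abs, abs_of_nonneg (hg0 _), hg]
      simp only [hcast, pow_add]
    rw [hidx, hGnorm, Real.norm_eq_abs, abs_of_nonneg (hg0 n)]
    show |x| ^ n * |x| ^ k / Real.Gamma (y + (k : ℝ) * α)
        ≤ 1 / 2 * (|x| ^ n / Real.Gamma y)
    rw [show (1 : ℝ) / 2 * (|x| ^ n / Real.Gamma y) = |x| ^ n / (2 * Real.Gamma y) from by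
        ring,
      div_le_div_iff₀ hΓy' (by positivity)]
    have hxn : (0 : ℝ) ≤ |x| ^ n := by positivity
    nlinarith [mul_le_mul_of_nonneg_left hstep hxn,
      mul_le_mul_of_nonneg_right hm (mul_nonneg hxn (hΓy.le))]
  have hsum : Summable (g ∘ (Nat.divModEquiv k).symm) := by
    refine (summable_prod_of_nonneg (fun p => hg0 _)).2 ⟨fun m => Summable.of_finite, ?_⟩
    have : ∀ m : ℕ, ∑' r : Fin k, (g ∘ (Nat.divModEquiv k).symm) (m, r)
        = ∑ r : Fin k, g (m * k + r) := by
      intro m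
      rw [tsum_fintype]
      rfl
    refine Summable.congr (f := fun m : ℕ => ∑ r : Fin k, g (m * k + r)) ?_
      fun m => (this m).symm
    exact summable_sum fun r _ => key (r : ℕ)
  exact ((Nat.divModEquiv k).symm.summable_iff).1 hsum
end

section
/- Two-delay exponential Gronwall bound (as used in the finite-time stability proof): Let h₁, h₂ > 0, h = max{h₁, h₂}, T ≥ h, and C ≥ 0. Let β : [0, T] → [0, ∞) be continuous and nondecreasing, ψ : [-h, 0] → [0, ∞) continuous, and u : [-h, T] → [0, ∞) continuous with u(t) = ψ(t) for t ∈ [-h, 0] and u(t) ≤ β(t) + C ∫_0^t ( u(s) + u(s - h₁) + u(s - h₂) ) ds for all t ∈ [0, T]. Then for every t ∈ [max{h₁, h₂}, T], u(t) ≤ [ β(t) + 2C ∫_{-h}^0 ψ(s) ds ] · exp( C (3t - h₁ - h₂) ). -/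
open MeasureTheory

noncomputable def tdgG (h₁ h₂ C s : ℝ) : ℝ :=
  Real.exp (C * (s + max (s - h₁) 0 + max (s - h₂) 0))

lemma tdgG_cont (h₁ h₂ C : ℝ) : Continuous (tdgG h₁ h₂ C) := by
  unfold tdgG; fun_prop

lemma tdgG_mono (h₁ h₂ C : ℝ) (hC : 0 ≤ C) : Monotone (tdgG h₁ h₂ C) := by
  intro a b hab
  unfold tdgG
  apply Real.exp_le_exp.2
  gcongr

lemma tdgG_pos (h₁ h₂ C s : ℝ) : 0 < tdgG h₁ h₂ C s := Real.exp_pos _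

lemma tdgG_zero (h₁ h₂ C : ℝ) (hh₁ : 0 ≤ h₁) (hh₂ : 0 ≤ h₂) : tdgG h₁ h₂ C 0 = 1 := by
  unfold tdgG
  rw [max_eq_right (by linarith), max_eq_right (by linarith)]
  norm_num

noncomputable def tdgF (h₁ h₂ C t : ℝ) : ℝ :=
  C * ((∫ s in (0:ℝ)..t, tdgG h₁ h₂ C s)
    + (∫ s in (0:ℝ)..max (t - h₁) 0, tdgG h₁ h₂ C s)
    + (∫ s in (0:ℝ)..max (t - h₂) 0, tdgG h₁ h₂ C s))

/-- key calculus inequality, assuming h₁ ≤ h₂ -/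
lemma tdg_key' (h₁ h₂ C : ℝ) (hh₁ : 0 < h₁) (h12 : h₁ ≤ h₂) (hC : 0 ≤ C)
    {t : ℝ} (ht : 0 ≤ t) :
    tdgF h₁ h₂ C t ≤ tdgG h₁ h₂ C t - 1 := by
  have hh₂ : 0 < h₂ := lt_of_lt_of_le hh₁ h12
  set g := tdgG h₁ h₂ C with hg
  have gcont := tdgG_cont h₁ h₂ C
  have gmono := tdgG_mono h₁ h₂ C hC
  set Φ : ℝ → ℝ := fun t => g t - 1 - tdgF h₁ h₂ C t with hΦ
  have hI : ∀ y : ℝ, HasDerivAt (fun x => ∫ s in (0:ℝ)..x, g s) (g y) y := fun y =>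
    (gcont.integral_hasStrictDerivAt 0 y).hasDerivAt
  have Φcont : Continuous Φ := by
    have : Continuous (fun t : ℝ => tdgF h₁ h₂ C t) := by
      unfold tdgF
      apply Continuous.mul continuous_const
      have hIc : Continuous (fun x => ∫ s in (0:ℝ)..x, g s) :=
        continuous_iff_continuousAt.2 fun y => (hI y).continuousAt
      apply Continuous.add
      apply Continuous.add
      · exact hIc
      · exact hIc.comp ((continuous_id.sub continuous_const).max continuous_const)
      · exact hIc.comp ((continuous_id.sub continuous_const).max continuous_const)
    exact (gcont.sub continuous_const).sub this
  have mono_aux : ∀ (D : Set ℝ), Convex ℝ D →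
      (∀ x ∈ interior D, ∃ d, 0 ≤ d ∧ HasDerivAt Φ d x) → MonotoneOn Φ D := by
    intro D hD h
    refine monotoneOn_of_deriv_nonneg hD Φcont.continuousOn
      (fun x hx => ((h x hx).choose_spec.2).differentiableAt.differentiableWithinAt) ?_
    intro x hx
    obtain ⟨d, hd, hdd⟩ := h x hx
    rw [hdd.deriv]; exact hd
  -- Piece 1 : on [0, h₁]
  have mono1 : MonotoneOn Φ (Set.Icc 0 h₁) := by
    apply mono_aux _ (convex_Icc 0 h₁)
    intro x hx
    rw [interior_Icc] at hx
    refine ⟨0, le_refl 0, ?_⟩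
    have hev : Φ =ᶠ[nhds x] fun t => Real.exp (C * (t + 0 + 0)) - 1
        - C * ((∫ s in (0:ℝ)..t, g s) + 0 + 0) := by
      filter_upwards [Iio_mem_nhds hx.2] with t ht
      have e1 : max (t - h₁) 0 = 0 := max_eq_right (by simp at ht; linarith)
      have e2 : max (t - h₂) 0 = 0 := max_eq_right (by simp at ht; linarith)
      simp only [hΦ, hg, tdgF, tdgG, e1, e2, intervalIntegral.integral_same]
    have hgx : g x = Real.exp (C * (x + 0 + 0)) := by
      have e1 : max (x - h₁) 0 = 0 := max_eq_right (by linarith [hx.2])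
      have e2 : max (x - h₂) 0 = 0 := max_eq_right (by nlinarith [hx.2])
      simp only [hg, tdgG, e1, e2]
    have hd : HasDerivAt (fun t => Real.exp (C * (t + 0 + 0)) - 1
        - C * ((∫ s in (0:ℝ)..t, g s) + 0 + 0))
        (Real.exp (C * (x + 0 + 0)) * (C * (1 + 0 + 0)) - C * (g x + 0 + 0)) x := by
      apply HasDerivAt.sub
      apply HasDerivAt.sub_const
      · convert ((((hasDerivAt_id x).add_const 0).add_const 0).const_mul C).exp using 1
        all_goals norm_num
        all_goals rfl
      · convert (((hI x).add_const 0).add_const 0).const_mul C using 1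
        all_goals norm_num
        all_goals rfl
    have : Real.exp (C * (x + 0 + 0)) * (C * (1 + 0 + 0)) - C * (g x + 0 + 0) = 0 := by
      rw [hgx]; ring
    rw [this] at hd
    exact hd.congr_of_eventuallyEq hev
  -- Piece 2 : on [h₁, h₂]
  have mono2 : MonotoneOn Φ (Set.Icc h₁ h₂) := by
    apply mono_aux _ (convex_Icc h₁ h₂)
    intro x hx
    rw [interior_Icc] at hx
    refine ⟨C * (g x - g (x - h₁)), by
      have := gmono (show x - h₁ ≤ x by linarith)
      have : 0 ≤ g x - g (x - h₁) := by linarith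
      positivity, ?_⟩
    have hev : Φ =ᶠ[nhds x] fun t => Real.exp (C * (t + (t - h₁) + 0)) - 1
        - C * ((∫ s in (0:ℝ)..t, g s) + (∫ s in (0:ℝ)..(t - h₁), g s) + 0) := by
      filter_upwards [Ioo_mem_nhds hx.1 hx.2] with t ht
      have e1 : max (t - h₁) 0 = t - h₁ := max_eq_left (by simp at ht; linarith [ht.1])
      have e2 : max (t - h₂) 0 = 0 := max_eq_right (by simp at ht; linarith [ht.2])
      simp only [hΦ, hg, tdgF, tdgG, e1, e2, intervalIntegral.integral_same]
    have hgx : g x = Real.exp (C * (x + (x - h₁) + 0)) := by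
      have e1 : max (x - h₁) 0 = x - h₁ := max_eq_left (by linarith [hx.1])
      have e2 : max (x - h₂) 0 = 0 := max_eq_right (by linarith [hx.2])
      simp only [hg, tdgG, e1, e2]
    have hshift : HasDerivAt (fun t => ∫ s in (0:ℝ)..(t - h₁), g s) (g (x - h₁) * 1) x :=
      by have := (hI (x - h₁)).comp x ((hasDerivAt_id x).sub_const h₁); exact this
    have hd : HasDerivAt (fun t => Real.exp (C * (t + (t - h₁) + 0)) - 1
        - C * ((∫ s in (0:ℝ)..t, g s) + (∫ s in (0:ℝ)..(t - h₁), g s) + 0))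
        (Real.exp (C * (x + (x - h₁) + 0)) * (C * (1 + 1 + 0))
          - C * (g x + g (x - h₁) * 1 + 0)) x := by
      apply HasDerivAt.sub
      apply HasDerivAt.sub_const
      · convert ((((hasDerivAt_id x).add ((hasDerivAt_id x).sub_const h₁)).add_const
          0).const_mul C).exp using 1
        all_goals norm_num
        all_goals rfl
      · convert (((hI x).add hshift).add_const 0).const_mul C using 1
        all_goals norm_num
        all_goals rfl
    have : Real.exp (C * (x + (x - h₁) + 0)) * (C * (1 + 1 + 0))
        - C * (g x + g (x - h₁) * 1 + 0) = C * (g x - g (x - h₁)) := by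
      rw [hgx]; ring
    rw [this] at hd
    exact hd.congr_of_eventuallyEq hev
  -- Piece 3 : on [h₂, ∞)
  have mono3 : MonotoneOn Φ (Set.Ici h₂) := by
    apply mono_aux _ (convex_Ici h₂)
    intro x hx
    rw [interior_Ici] at hx
    simp only [Set.mem_Ioi] at hx
    refine ⟨C * (2 * g x - g (x - h₁) - g (x - h₂)), by
      have a1 := gmono (show x - h₁ ≤ x by linarith)
      have a2 := gmono (show x - h₂ ≤ x by linarith)
      have : 0 ≤ 2 * g x - g (x - h₁) - g (x - h₂) := by linarith
      positivity, ?_⟩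
    have hev : Φ =ᶠ[nhds x] fun t => Real.exp (C * (t + (t - h₁) + (t - h₂))) - 1
        - C * ((∫ s in (0:ℝ)..t, g s) + (∫ s in (0:ℝ)..(t - h₁), g s)
          + (∫ s in (0:ℝ)..(t - h₂), g s)) := by
      filter_upwards [Ioi_mem_nhds hx] with t ht
      simp only [Set.mem_Ioi] at ht
      have e1 : max (t - h₁) 0 = t - h₁ := max_eq_left (by linarith)
      have e2 : max (t - h₂) 0 = t - h₂ := max_eq_left (by linarith)
      simp only [hΦ, hg, tdgF, tdgG, e1, e2]
    have hgx : g x = Real.exp (C * (x + (x - h₁) + (x - h₂))) := by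
      have e1 : max (x - h₁) 0 = x - h₁ := max_eq_left (by linarith)
      have e2 : max (x - h₂) 0 = x - h₂ := max_eq_left (by linarith)
      simp only [hg, tdgG, e1, e2]
    have hs1 : HasDerivAt (fun t => ∫ s in (0:ℝ)..(t - h₁), g s) (g (x - h₁) * 1) x :=
      by have := (hI (x - h₁)).comp x ((hasDerivAt_id x).sub_const h₁); exact this
    have hs2 : HasDerivAt (fun t => ∫ s in (0:ℝ)..(t - h₂), g s) (g (x - h₂) * 1) x :=
      by have := (hI (x - h₂)).comp x ((hasDerivAt_id x).sub_const h₂); exact this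
    have hd : HasDerivAt (fun t => Real.exp (C * (t + (t - h₁) + (t - h₂))) - 1
        - C * ((∫ s in (0:ℝ)..t, g s) + (∫ s in (0:ℝ)..(t - h₁), g s)
          + (∫ s in (0:ℝ)..(t - h₂), g s)))
        (Real.exp (C * (x + (x - h₁) + (x - h₂))) * (C * (1 + 1 + 1))
          - C * (g x + g (x - h₁) * 1 + g (x - h₂) * 1)) x := by
      apply HasDerivAt.sub
      apply HasDerivAt.sub_const
      · convert ((((hasDerivAt_id x).add ((hasDerivAt_id x).sub_const h₁)).add
          ((hasDerivAt_id x).sub_const h₂)).const_mul C).exp using 1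
        all_goals norm_num
        all_goals rfl
      · convert (((hI x).add hs1).add hs2).const_mul C using 1
        all_goals norm_num
        all_goals rfl
    have : Real.exp (C * (x + (x - h₁) + (x - h₂))) * (C * (1 + 1 + 1))
        - C * (g x + g (x - h₁) * 1 + g (x - h₂) * 1)
        = C * (2 * g x - g (x - h₁) - g (x - h₂)) := by
      rw [hgx]; ring
    rw [this] at hd
    exact hd.congr_of_eventuallyEq hev
  -- combine: Φ 0 ≤ Φ t for t ≥ 0
  have hΦ0 : Φ 0 = 0 := by
    have hF0 : tdgF h₁ h₂ C 0 = 0 := by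
      have e1 : max ((0:ℝ) - h₁) 0 = 0 := max_eq_right (by linarith)
      have e2 : max ((0:ℝ) - h₂) 0 = 0 := max_eq_right (by linarith)
      unfold tdgF
      rw [e1, e2]
      simp
    simp [hΦ, hF0, hg, tdgG_zero h₁ h₂ C hh₁.le hh₂.le]
  have hΦt : Φ 0 ≤ Φ t := by
    rcases le_total t h₁ with h | h
    · exact mono1 ⟨le_refl 0, hh₁.le⟩ ⟨ht, h⟩ ht
    · have step1 : Φ 0 ≤ Φ h₁ := mono1 ⟨le_refl 0, hh₁.le⟩ ⟨hh₁.le, le_refl h₁⟩ hh₁.le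
      rcases le_total t h₂ with h' | h'
      · exact step1.trans (mono2 ⟨le_refl h₁, h12⟩ ⟨h, h'⟩ h)
      · have step2 : Φ h₁ ≤ Φ h₂ := mono2 ⟨le_refl h₁, h12⟩ ⟨h12, le_refl h₂⟩ h12
        exact step1.trans (step2.trans (mono3 (le_refl h₂) h' h'))
  rw [hΦ0] at hΦt
  simp only [hΦ] at hΦt
  linarith


lemma tdgG_symm (h₁ h₂ C : ℝ) : tdgG h₁ h₂ C = tdgG h₂ h₁ C := by
  funext s; unfold tdgG; congr 1; ring

lemma tdg_key (h₁ h₂ C : ℝ) (hh₁ : 0 < h₁) (hh₂ : 0 < h₂) (hC : 0 ≤ C)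
    {t : ℝ} (ht : 0 ≤ t) :
    tdgF h₁ h₂ C t ≤ tdgG h₁ h₂ C t - 1 := by
  rcases le_total h₁ h₂ with h | h
  · exact tdg_key' h₁ h₂ C hh₁ h hC ht
  · have := tdg_key' h₂ h₁ C hh₂ h hC ht
    have hF : tdgF h₁ h₂ C t = tdgF h₂ h₁ C t := by
      unfold tdgF; rw [tdgG_symm h₁ h₂ C]; ring
    rw [hF, tdgG_symm h₁ h₂ C]
    exact this

lemma tdg_shift_bound (hm d T σ : ℝ) (u : ℝ → ℝ) (hd : 0 < d) (hdm : d ≤ hm)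
    (hσ0 : 0 ≤ σ) (hσT : σ ≤ T)
    (hu_cont : ContinuousOn u (Set.Icc (-hm) T))
    (hu_nonneg : ∀ s ∈ Set.Icc (-hm) T, 0 ≤ u s) :
    (∫ s in (-d)..(σ - d), u s)
      ≤ (∫ s in (-hm)..(0:ℝ), u s) + ∫ s in (0:ℝ)..(max (σ - d) 0), u s := by
  have hT0 : (0:ℝ) ≤ T := le_trans hσ0 hσT
  have huint : ∀ a b : ℝ, -hm ≤ a → a ≤ b → b ≤ T → IntervalIntegrable u volume a b := by
    intro a b ha hab hbT
    apply ContinuousOn.intervalIntegrable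
    apply hu_cont.mono
    rw [Set.uIcc_of_le hab]
    exact Set.Icc_subset_Icc ha hbT
  have hnn : ∀ a b : ℝ, -hm ≤ a → a ≤ b → b ≤ T → (0:ℝ) ≤ ∫ s in a..b, u s := by
    intro a b ha hab hbT
    apply intervalIntegral.integral_nonneg hab
    intro x hx
    exact hu_nonneg x ⟨le_trans ha hx.1, le_trans hx.2 hbT⟩
  rcases le_or_gt σ d with h | h
  · have hmax : max (σ - d) 0 = 0 := max_eq_right (by linarith)
    rw [hmax, intervalIntegral.integral_same, add_zero]
    have A := intervalIntegral.integral_add_adjacent_intervals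
      (huint (-hm) (-d) (by linarith) (by linarith) (by linarith))
      (huint (-d) 0 (by linarith) (by linarith) hT0)
    have B := intervalIntegral.integral_add_adjacent_intervals
      (huint (-d) (σ - d) (by linarith) (by linarith) (by linarith))
      (huint (σ - d) 0 (by linarith) (by linarith) hT0)
    have n1 := hnn (-hm) (-d) (by linarith) (by linarith) (by linarith)
    have n2 := hnn (σ - d) 0 (by linarith) (by linarith) hT0
    linarith
  · have hmax : max (σ - d) 0 = σ - d := max_eq_left (by linarith)
    rw [hmax]
    have A := intervalIntegral.integral_add_adjacent_intervals
      (huint (-d) 0 (by linarith) (by linarith) hT0)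
      (huint 0 (σ - d) (by linarith) (by linarith) (by linarith))
    have B := intervalIntegral.integral_add_adjacent_intervals
      (huint (-hm) (-d) (by linarith) (by linarith) (by linarith))
      (huint (-d) 0 (by linarith) (by linarith) hT0)
    have n1 := hnn (-hm) (-d) (by linarith) (by linarith) (by linarith)
    linarith

/-- Two-delay exponential Gronwall bound (as used in the finite-time stability proof). -/
theorem two_delay_gronwall (h₁ h₂ T C : ℝ) (hh₁ : 0 < h₁) (hh₂ : 0 < h₂)
    (hT : max h₁ h₂ ≤ T) (hC : 0 ≤ C) (β ψ u : ℝ → ℝ)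
    (hβ_cont : ContinuousOn β (Set.Icc 0 T)) (hβ_mono : MonotoneOn β (Set.Icc 0 T))
    (hβ_nonneg : ∀ t ∈ Set.Icc (0 : ℝ) T, 0 ≤ β t)
    (hψ_cont : ContinuousOn ψ (Set.Icc (-(max h₁ h₂)) 0))
    (hψ_nonneg : ∀ t ∈ Set.Icc (-(max h₁ h₂)) (0 : ℝ), 0 ≤ ψ t)
    (hu_cont : ContinuousOn u (Set.Icc (-(max h₁ h₂)) T))
    (hu_nonneg : ∀ t ∈ Set.Icc (-(max h₁ h₂)) T, 0 ≤ u t)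
    (hu_init : ∀ t ∈ Set.Icc (-(max h₁ h₂)) (0 : ℝ), u t = ψ t)
    (hu_ineq : ∀ t ∈ Set.Icc (0 : ℝ) T,
      u t ≤ β t + C * ∫ s in (0 : ℝ)..t, u s + u (s - h₁) + u (s - h₂)) :
    ∀ t ∈ Set.Icc (max h₁ h₂) T,
      u t ≤ (β t + 2 * C * ∫ s in (-(max h₁ h₂))..(0 : ℝ), ψ s) *
        Real.exp (C * (3 * t - h₁ - h₂)) := by
  intro t htmem
  set hm := max h₁ h₂ with hhm
  obtain ⟨hth, htT⟩ := htmem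
  have h1m : h₁ ≤ hm := le_max_left _ _
  have h2m : h₂ ≤ hm := le_max_right _ _
  have hhm0 : 0 < hm := lt_of_lt_of_le hh₁ h1m
  have ht0 : 0 ≤ t := le_trans hhm0.le hth
  have hT0 : (0:ℝ) ≤ T := le_trans ht0 htT
  set g := tdgG h₁ h₂ C with hgdef
  have gcont := tdgG_cont h₁ h₂ C
  have gpos : ∀ s, 0 < g s := tdgG_pos h₁ h₂ C
  set B := β t + 2 * C * ∫ s in (-hm)..(0:ℝ), ψ s with hB
  -- basic facts
  have huψ : (∫ s in (-hm)..(0:ℝ), u s) = ∫ s in (-hm)..(0:ℝ), ψ s := by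
    apply intervalIntegral.integral_congr
    intro x hx
    rw [Set.uIcc_of_le (by linarith : -hm ≤ (0:ℝ))] at hx
    exact hu_init x hx
  have hψint : (0:ℝ) ≤ ∫ s in (-hm)..(0:ℝ), ψ s := by
    apply intervalIntegral.integral_nonneg (by linarith)
    exact fun x hx => hψ_nonneg x hx
  have hβt : 0 ≤ β t := hβ_nonneg t ⟨ht0, htT⟩
  have hB0 : 0 ≤ B := by positivity
  have huint : ∀ a b : ℝ, -hm ≤ a → a ≤ b → b ≤ T → IntervalIntegrable u volume a b := by
    intro a b ha hab hbT
    apply ContinuousOn.intervalIntegrable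
    apply hu_cont.mono
    rw [Set.uIcc_of_le hab]
    exact Set.Icc_subset_Icc ha hbT
  -- the key one-step estimate
  have key : ∀ ε : ℝ, 0 < ε → ∀ σ ∈ Set.Icc (0:ℝ) t,
      (∀ r ∈ Set.Icc (0:ℝ) σ, u r ≤ (B + ε) * g r) → u σ ≤ (B + ε) * g σ - ε := by
    intro ε hε σ hσ hyp
    have hσ0 : 0 ≤ σ := hσ.1
    have hσt : σ ≤ t := hσ.2
    have hσT : σ ≤ T := le_trans hσt htT
    have h1 := hu_ineq σ ⟨hσ0, hσT⟩
    have hshiftint : ∀ d : ℝ, 0 < d → d ≤ hm →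
        IntervalIntegrable (fun s => u (s - d)) volume 0 σ := by
      intro d hd hdm
      apply ContinuousOn.intervalIntegrable
      apply hu_cont.comp (continuousOn_id.sub continuousOn_const)
      intro x hx
      rw [Set.uIcc_of_le hσ0] at hx
      exact ⟨by show -hm ≤ x - d; linarith [hx.1], by show x - d ≤ T; linarith [hx.2]⟩
    have hint1 := huint 0 σ (by linarith) hσ0 hσT
    have hint2 := hshiftint h₁ hh₁ h1m
    have hint3 := hshiftint h₂ hh₂ h2m
    have hsplit : (∫ s in (0:ℝ)..σ, (u s + u (s - h₁) + u (s - h₂)))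
        = (∫ s in (0:ℝ)..σ, u s) + (∫ s in (0:ℝ)..σ, u (s - h₁))
          + (∫ s in (0:ℝ)..σ, u (s - h₂)) := by
      rw [intervalIntegral.integral_add (hint1.add hint2) hint3,
        intervalIntegral.integral_add hint1 hint2]
    have hshift1 : (∫ s in (0:ℝ)..σ, u (s - h₁)) = ∫ s in (-h₁)..(σ - h₁), u s := by
      simpa using intervalIntegral.integral_comp_sub_right (a := (0:ℝ)) (b := σ) u h₁
    have hshift2 : (∫ s in (0:ℝ)..σ, u (s - h₂)) = ∫ s in (-h₂)..(σ - h₂), u s := by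
      simpa using intervalIntegral.integral_comp_sub_right (a := (0:ℝ)) (b := σ) u h₂
    have hb1 := tdg_shift_bound hm h₁ T σ u hh₁ h1m hσ0 hσT hu_cont hu_nonneg
    have hb2 := tdg_shift_bound hm h₂ T σ u hh₂ h2m hσ0 hσT hu_cont hu_nonneg
    -- pointwise bounds by (B+ε) * g
    have hBε : (0:ℝ) ≤ B + ε := by linarith
    have hgint : ∀ a b : ℝ, IntervalIntegrable (fun s => (B + ε) * g s) volume a b :=
      fun a b => (continuous_const.mul gcont).intervalIntegrable a b
    have hptw : ∀ a : ℝ, 0 ≤ a → a ≤ σ →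
        (∫ s in (0:ℝ)..a, u s) ≤ (B + ε) * ∫ s in (0:ℝ)..a, g s := by
      intro a ha haσ
      rw [← intervalIntegral.integral_const_mul]
      apply intervalIntegral.integral_mono_on ha
        (huint 0 a (by linarith) ha (by linarith)) (hgint 0 a)
      intro x hx
      exact hyp x ⟨hx.1, le_trans hx.2 haσ⟩
    have hm1 : max (σ - h₁) 0 ≤ σ := by
      apply max_le (by linarith) hσ0
    have hm2 : max (σ - h₂) 0 ≤ σ := by
      apply max_le (by linarith) hσ0
    have hp0 := hptw σ hσ0 le_rfl
    have hp1 := hptw (max (σ - h₁) 0) (le_max_right _ _) hm1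
    have hp2 := hptw (max (σ - h₂) 0) (le_max_right _ _) hm2
    have hkey := tdg_key h₁ h₂ C hh₁ hh₂ hC hσ0
    have hβσ : β σ ≤ β t := hβ_mono ⟨hσ0, hσT⟩ ⟨ht0, htT⟩ hσt
    -- combine
    have hFle : (B + ε) * tdgF h₁ h₂ C σ ≤ (B + ε) * (g σ - 1) :=
      mul_le_mul_of_nonneg_left hkey hBε
    have hsum : (∫ s in (0:ℝ)..σ, (u s + u (s - h₁) + u (s - h₂)))
        ≤ 2 * (∫ s in (-hm)..(0:ℝ), ψ s)
          + ((B + ε) * (∫ s in (0:ℝ)..σ, g s)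
            + (B + ε) * (∫ s in (0:ℝ)..max (σ - h₁) 0, g s)
            + (B + ε) * (∫ s in (0:ℝ)..max (σ - h₂) 0, g s)) := by
      rw [hsplit, hshift1, hshift2]
      rw [← huψ]
      linarith
    have hC1 : C * (∫ s in (0:ℝ)..σ, (u s + u (s - h₁) + u (s - h₂)))
        ≤ C * (2 * (∫ s in (-hm)..(0:ℝ), ψ s)
          + ((B + ε) * (∫ s in (0:ℝ)..σ, g s)
            + (B + ε) * (∫ s in (0:ℝ)..max (σ - h₁) 0, g s)
            + (B + ε) * (∫ s in (0:ℝ)..max (σ - h₂) 0, g s))) :=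
      mul_le_mul_of_nonneg_left hsum hC
    have hFdef : (B + ε) * tdgF h₁ h₂ C σ
        = C * ((B + ε) * (∫ s in (0:ℝ)..σ, g s)
            + (B + ε) * (∫ s in (0:ℝ)..max (σ - h₁) 0, g s)
            + (B + ε) * (∫ s in (0:ℝ)..max (σ - h₂) 0, g s)) := by
      unfold tdgF; rw [← hgdef]; ring
    have hexp : C * (2 * (∫ s in (-hm)..(0:ℝ), ψ s)
          + ((B + ε) * (∫ s in (0:ℝ)..σ, g s)
            + (B + ε) * (∫ s in (0:ℝ)..max (σ - h₁) 0, g s)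
            + (B + ε) * (∫ s in (0:ℝ)..max (σ - h₂) 0, g s)))
        = 2 * C * (∫ s in (-hm)..(0:ℝ), ψ s) + (B + ε) * tdgF h₁ h₂ C σ := by
      rw [hFdef]; ring
    rw [hexp] at hC1
    linarith [hC1, hFle, h1, hβσ, hB]
  -- the ε-perturbed bound via a supremum argument
  have main : ∀ ε : ℝ, 0 < ε → u t ≤ (B + ε) * g t := by
    intro ε hε
    set A := {s : ℝ | s ∈ Set.Icc (0:ℝ) t ∧ ∀ r ∈ Set.Icc (0:ℝ) s, u r ≤ (B + ε) * g r}
      with hAdef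
    have h0A : (0:ℝ) ∈ A := by
      refine ⟨⟨le_refl 0, ht0⟩, ?_⟩
      intro r hr
      have hr0 : r = 0 := le_antisymm hr.2 hr.1
      subst hr0
      have h2 := hu_ineq 0 ⟨le_refl 0, hT0⟩
      simp only [intervalIntegral.integral_same, mul_zero, add_zero] at h2
      have hβ0 : β 0 ≤ β t := hβ_mono ⟨le_refl 0, hT0⟩ ⟨ht0, htT⟩ ht0
      have hg0 : g 0 = 1 := tdgG_zero h₁ h₂ C hh₁.le hh₂.le
      rw [hg0, mul_one]
      have : 0 ≤ 2 * C * ∫ s in (-hm)..(0:ℝ), ψ s := by positivity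
      rw [hB]; linarith
    have hbdd : BddAbove A := ⟨t, fun s hs => hs.1.2⟩
    have hne : A.Nonempty := ⟨0, h0A⟩
    set σ := sSup A with hσdef
    have hσmem : σ ∈ Set.Icc 0 t := ⟨le_csSup hbdd h0A, csSup_le hne fun s hs => hs.1.2⟩
    have hPlt : ∀ r : ℝ, 0 ≤ r → r < σ → u r ≤ (B + ε) * g r := by
      intro r hr0 hrσ
      obtain ⟨s, hsA, hrs⟩ := exists_lt_of_lt_csSup hne hrσ
      exact hsA.2 r ⟨hr0, hrs.le⟩
    have hσA : ∀ r ∈ Set.Icc (0:ℝ) σ, u r ≤ (B + ε) * g r := by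
      intro r hr
      rcases lt_or_eq_of_le hr.2 with hlt | heq
      · exact hPlt r hr.1 hlt
      · rcases eq_or_lt_of_le hr.1 with h0 | h0
        · rw [← h0]; exact h0A.2 0 ⟨le_refl 0, le_refl 0⟩
        · -- limit from the left
          have hcu : ContinuousWithinAt u (Set.Ioo 0 r) r := by
            apply (hu_cont.continuousWithinAt ⟨by linarith, le_trans hr.2 (hσmem.2.trans htT)⟩).mono
            intro x hx
            exact ⟨by linarith [hx.1], by linarith [hx.2, hr.2, hσmem.2, htT]⟩
          have hcg : ContinuousWithinAt (fun s => (B + ε) * g s) (Set.Ioo 0 r) r :=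
            (continuous_const.mul gcont).continuousWithinAt
          have hNB : (nhdsWithin r (Set.Ioo 0 r)).NeBot := by
            apply mem_closure_iff_nhdsWithin_neBot.mp
            rw [closure_Ioo (ne_of_lt h0)]
            exact ⟨h0.le, le_refl r⟩
          apply le_of_tendsto_of_tendsto hcu hcg
          filter_upwards [self_mem_nhdsWithin] with x hx
          exact hPlt x hx.1.le (lt_of_lt_of_le hx.2 hr.2)
    have hσt : σ = t := by
      by_contra hne'
      have hσlt : σ < t := lt_of_le_of_ne hσmem.2 hne'
      have hest := key ε hε σ hσmem hσA
      -- continuity pushes beyond σ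
      set f := fun s => u s - (B + ε) * g s with hf
      have hfσ : f σ < 0 := by
        have := gpos σ
        simp only [hf]
        linarith
      have hfc : ContinuousWithinAt f (Set.Icc 0 t) σ := by
        apply ContinuousWithinAt.sub
        · apply (hu_cont.continuousWithinAt ⟨by linarith [hσmem.1], hσmem.2.trans htT⟩).mono
          intro x hx
          exact ⟨by linarith [hx.1], hx.2.trans htT⟩
        · exact (continuous_const.mul gcont).continuousWithinAt
      have hev : f ⁻¹' Set.Iio 0 ∈ nhdsWithin σ (Set.Icc 0 t) := hfc (Iio_mem_nhds hfσ)
      rw [mem_nhdsWithin] at hev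
      obtain ⟨U, hUopen, hσU, hUsub⟩ := hev
      obtain ⟨δ, hδ, hball⟩ := Metric.isOpen_iff.mp hUopen σ hσU
      set σ' := min t (σ + δ / 2) with hσ'
      have hσσ' : σ < σ' := lt_min hσlt (by linarith)
      have hσ'A : σ' ∈ A := by
        refine ⟨⟨le_trans hσmem.1 hσσ'.le, min_le_left _ _⟩, ?_⟩
        intro r hr
        rcases le_or_gt r σ with hc | hc
        · exact hσA r ⟨hr.1, hc⟩
        · have hrU : r ∈ U := by
            apply hball
            rw [Metric.mem_ball, Real.dist_eq, abs_of_nonneg (by linarith)]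
            have : r ≤ σ + δ / 2 := le_trans hr.2 (min_le_right _ _)
            linarith
          have : f r < 0 := hUsub ⟨hrU, ⟨hr.1, le_trans hr.2 (min_le_left _ _)⟩⟩
          simp only [hf] at this
          linarith
      have : σ' ≤ σ := le_csSup hbdd hσ'A
      linarith
    rw [← hσt]
    exact hσA σ ⟨hσmem.1, le_refl σ⟩
  -- let ε → 0
  have hgt : g t = Real.exp (C * (3 * t - h₁ - h₂)) := by
    rw [hgdef]
    unfold tdgG
    rw [max_eq_left (by linarith : (0:ℝ) ≤ t - h₁), max_eq_left (by linarith : (0:ℝ) ≤ t - h₂)]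
    congr 1; ring
  have hfinal : u t ≤ B * g t := by
    apply le_of_forall_pos_le_add
    intro ε' hε'
    have hgtpos := gpos t
    have := main (ε' / g t) (by positivity)
    calc u t ≤ (B + ε' / g t) * g t := this
    _ = B * g t + ε' := by field_simp
  rw [hB, hgt] at hfinal
  exact hfinal
end
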